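/- If π satisfies b(π;p) = 0 for distributions p_X, p_A, p_T with strictly positive p_X and p_A, and with p_T strictly positive on a generating set G of the symmetric group S_K, then π is AP-symmetric with respect to the full group S_K. -/
import Mathlib


/-- If the order bias vanishes for distributions with pX, pA strictly positive
and pT nonnegative and strictly positive on a generating set G of the
symmetric group, then the policy is AP-symmetric with respect to the full
symmetric group. -/
theorem stmt17 {X S : Type*} [Fintype X] [Fintype S] {K : ℕ}
    (π : (Fin K → S) → X → ℝ)
    (G : Set (Equiv.Perm (Fin K))) (hG : Subgroup.closure G = ⊤)
    (pX : X → ℝ) (pA : (Fin K → S) → ℝ) (pT : Equiv.Perm (Fin K) → ℝ)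
    (hpX : ∀ x, 0 < pX x) (hpA : ∀ a, 0 < pA a)
    (hpT0 : ∀ σ, 0 ≤ pT σ) (hpTG : ∀ σ ∈ G, 0 < pT σ)
    (hb : ∑ x : X, ∑ a : Fin K → S, ∑ σ : Equiv.Perm (Fin K),
      pX x * pA a * pT σ * |π a x - π (a ∘ ⇑σ⁻¹) x| = 0) :
    ∀ (a : Fin K → S) (x : X) (σ : Equiv.Perm (Fin K)), π a x = π (a ∘ ⇑σ⁻¹) x := by
  have nonneg : ∀ x a σ, 0 ≤ pX x * pA a * pT σ * |π a x - π (a ∘ ⇑σ⁻¹) x| := by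
    intro x a σ
    exact mul_nonneg (mul_nonneg (mul_nonneg (hpX x).le (hpA a).le) (hpT0 σ)) (abs_nonneg _)
  have key : ∀ σ ∈ G, ∀ (a : Fin K → S) (x : X), π a x = π (a ∘ ⇑σ⁻¹) x := by
    intro σ hσ a x
    have h1 : ∀ x ∈ Finset.univ, (0:ℝ) ≤ ∑ a : Fin K → S, ∑ σ : Equiv.Perm (Fin K),
        pX x * pA a * pT σ * |π a x - π (a ∘ ⇑σ⁻¹) x| := by
      intro x _
      exact Finset.sum_nonneg fun a _ => Finset.sum_nonneg fun σ _ => nonneg x a σ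
    have h2 := (Finset.sum_eq_zero_iff_of_nonneg h1).mp hb x (Finset.mem_univ x)
    have h3 : ∀ a ∈ Finset.univ, (0:ℝ) ≤ ∑ σ : Equiv.Perm (Fin K),
        pX x * pA a * pT σ * |π a x - π (a ∘ ⇑σ⁻¹) x| :=
      fun a _ => Finset.sum_nonneg fun σ _ => nonneg x a σ
    have h4 := (Finset.sum_eq_zero_iff_of_nonneg h3).mp h2 a (Finset.mem_univ a)
    have h5 := (Finset.sum_eq_zero_iff_of_nonneg
      (fun σ _ => nonneg x a σ)).mp h4 σ (Finset.mem_univ σ)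
    have hpos : 0 < pX x * pA a * pT σ :=
      mul_pos (mul_pos (hpX x) (hpA a)) (hpTG σ hσ)
    have : |π a x - π (a ∘ ⇑σ⁻¹) x| = 0 := by
      by_contra hne
      exact hne (by
        have := mul_eq_zero.mp h5
        rcases this with h | h
        · exact absurd h hpos.ne'
        · exact h)
    have := abs_eq_zero.mp this
    linarith
  intro a x σ
  let H : Subgroup (Equiv.Perm (Fin K)) :=
  { carrier := {σ | ∀ (a : Fin K → S) (x : X), π a x = π (a ∘ ⇑σ⁻¹) x}
    one_mem' := by intro a x; simp
    mul_mem' := by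
      intro σ τ hσ hτ a x
      have h1 : a ∘ ⇑(σ * τ)⁻¹ = (a ∘ ⇑τ⁻¹) ∘ ⇑σ⁻¹ := by
        funext i; simp [Equiv.Perm.mul_apply]
      rw [h1, ← hσ (a ∘ ⇑τ⁻¹) x, ← hτ a x]
    inv_mem' := by
      intro σ hσ a x
      have := hσ (a ∘ ⇑σ) x
      have h1 : (a ∘ ⇑σ) ∘ ⇑σ⁻¹ = a := by funext i; simp
      rw [h1] at this
      simpa using this.symm }
  have hGH : G ⊆ H := fun τ hτ => key τ hτ
  have : σ ∈ H := by
    have := (Subgroup.closure_le H).mpr hGH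
    rw [hG] at this
    exact this (Subgroup.mem_top σ)
  exact this a x
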